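/- Let A be a real symmetric n×n matrix with at most one positive eigenvalue, and let R be any real m×n matrix. Then the symmetric matrix R A Rᵀ has at most one positive eigenvalue. -/

import Mathlib

open Finset Matrix

private lemma quad_form_eq (n : ℕ) (A : Matrix (Fin n) (Fin n) ℝ) (hA : A.IsHermitian)
    (x : Fin n → ℝ) :
    x ⬝ᵥ A *ᵥ x = ∑ i, hA.eigenvalues i *
      ((star (hA.eigenvectorUnitary : Matrix (Fin n) (Fin n) ℝ) *ᵥ x) i)^2 := by
  set U : Matrix (Fin n) (Fin n) ℝ := ↑hA.eigenvectorUnitary with hU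
  set c : Fin n → ℝ := star U *ᵥ x with hc
  conv_lhs => rw [hA.spectral_theorem, Unitary.conjStarAlgAut_apply]
  rw [← Matrix.mulVec_mulVec, ← Matrix.mulVec_mulVec, dotProduct_mulVec]
  have h1 : x ᵥ* U = c := by
    rw [hc]
    ext i
    simp [Matrix.vecMul, Matrix.mulVec, dotProduct, mul_comm, Matrix.conjTranspose_apply]
  rw [h1]
  simp [Matrix.mulVec_diagonal, dotProduct, mul_comm, sq, Function.comp]
  exact Finset.sum_congr rfl fun i _ => by ring

/-- If at most one eigenvalue is positive, there is a vector `w` such that the form is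
nonpositive on the hyperplane orthogonal to `w`. -/
private lemma exists_w (n : ℕ) (A : Matrix (Fin n) (Fin n) ℝ) (hA : A.IsHermitian)
    (hcount : (Finset.univ.filter fun i => 0 < hA.eigenvalues i).card ≤ 1) :
    ∃ w : Fin n → ℝ, ∀ x : Fin n → ℝ, w ⬝ᵥ x = 0 → x ⬝ᵥ A *ᵥ x ≤ 0 := by
  set U : Matrix (Fin n) (Fin n) ℝ := ↑hA.eigenvectorUnitary with hU
  rcases Nat.le_one_iff_eq_zero_or_eq_one.mp hcount with h0 | h1
  · -- no positive eigenvalue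
    refine ⟨0, fun x _ => ?_⟩
    rw [quad_form_eq n A hA x]
    apply Finset.sum_nonpos
    intro i _
    have : ¬ (0 < hA.eigenvalues i) := by
      intro h
      have : i ∈ (Finset.univ.filter fun i => 0 < hA.eigenvalues i) := by simp [h]
      simp [Finset.card_eq_zero.mp h0] at this
    exact mul_nonpos_of_nonpos_of_nonneg (le_of_not_gt this) (sq_nonneg _)
  · obtain ⟨j, hj⟩ := Finset.card_eq_one.mp h1
    refine ⟨fun k => U k j, fun x hx => ?_⟩
    have hcj : (star U *ᵥ x) j = 0 := by
      rw [← hx]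
      simp [Matrix.mulVec, dotProduct, Matrix.conjTranspose_apply]
    rw [quad_form_eq n A hA x]
    apply Finset.sum_nonpos
    intro i _
    by_cases hij : i = j
    · subst hij; rw [← hU, hcj]; ring_nf; simp
    · have : i ∉ (Finset.univ.filter fun i => 0 < hA.eigenvalues i) := by
        rw [hj]; simp [hij]
      have hle : hA.eigenvalues i ≤ 0 := by
        simp only [Finset.mem_filter, Finset.mem_univ, true_and] at this
        linarith [lt_or_ge 0 (hA.eigenvalues i), this]
      exact mul_nonpos_of_nonpos_of_nonneg hle (sq_nonneg _)

private lemma card_le_one_of_w (m : ℕ) (B : Matrix (Fin m) (Fin m) ℝ) (hB : B.IsHermitian)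
    (w : Fin m → ℝ) (hw : ∀ x : Fin m → ℝ, w ⬝ᵥ x = 0 → x ⬝ᵥ B *ᵥ x ≤ 0) :
    (Finset.univ.filter fun i => 0 < hB.eigenvalues i).card ≤ 1 := by
  by_contra h
  push_neg at h
  obtain ⟨i, hi, j, hj, hij⟩ := Finset.one_lt_card.mp h
  simp only [Finset.mem_filter, Finset.mem_univ, true_and] at hi hj
  set u : Fin m → ℝ := ⇑(hB.eigenvectorBasis i) with hu
  set v : Fin m → ℝ := ⇑(hB.eigenvectorBasis j) with hv
  have horth := hB.eigenvectorBasis.orthonormal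
  rw [orthonormal_iff_ite] at horth
  have huu : u ⬝ᵥ u = 1 := by
    have := horth i i
    rw [PiLp.inner_apply] at this
    simpa [dotProduct, mul_comm, hu, hv, sq] using this
  have hvv : v ⬝ᵥ v = 1 := by
    have := horth j j
    rw [PiLp.inner_apply] at this
    simpa [dotProduct, mul_comm, hu, hv, sq] using this
  have huv : u ⬝ᵥ v = 0 := by
    have := horth i j
    rw [PiLp.inner_apply] at this
    simpa [dotProduct, mul_comm, hij] using this
  have hvu : v ⬝ᵥ u = 0 := by
    have := horth j i
    rw [PiLp.inner_apply] at this
    simpa [dotProduct, mul_comm, hij.symm] using this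
  have hBu : B *ᵥ u = hB.eigenvalues i • u := hB.mulVec_eigenvectorBasis i
  have hBv : B *ᵥ v = hB.eigenvalues j • v := hB.mulVec_eigenvectorBasis j
  set a : ℝ := w ⬝ᵥ v with ha
  set b : ℝ := w ⬝ᵥ u with hb
  obtain ⟨a', b', hab, hz⟩ : ∃ a' b' : ℝ, (a' ≠ 0 ∨ b' ≠ 0) ∧ a' * b - b' * a = 0 := by
    by_cases hcase : a = 0 ∧ b = 0
    · exact ⟨1, 0, Or.inl one_ne_zero, by rw [hcase.1, hcase.2]; ring⟩
    · refine ⟨a, b, ?_, by ring⟩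
      by_contra hc
      push_neg at hc
      exact hcase ⟨hc.1, hc.2⟩
  set z : Fin m → ℝ := a' • u - b' • v with hzdef
  have hwz : w ⬝ᵥ z = 0 := by
    rw [hzdef, dotProduct_sub, dotProduct_smul, dotProduct_smul,
      ← ha, ← hb]
    simp only [smul_eq_mul]
    linarith [hz]
  have hq : z ⬝ᵥ B *ᵥ z = a'^2 * hB.eigenvalues i + b'^2 * hB.eigenvalues j := by
    rw [hzdef, Matrix.mulVec_sub, Matrix.mulVec_smul, Matrix.mulVec_smul, hBu, hBv]
    rw [sub_dotProduct, smul_dotProduct, smul_dotProduct]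
    rw [dotProduct_sub, dotProduct_sub]
    simp only [dotProduct_smul, smul_eq_mul]
    rw [huu, hvv, huv, hvu]
    ring
  have hpos : 0 < z ⬝ᵥ B *ᵥ z := by
    rw [hq]
    rcases hab with h' | h'
    · have : 0 < a'^2 * hB.eigenvalues i := mul_pos (by positivity) hi
      nlinarith [sq_nonneg b', hj.le, mul_nonneg (sq_nonneg b') hj.le]
    · have : 0 < b'^2 * hB.eigenvalues j := mul_pos (by positivity) hj
      nlinarith [mul_nonneg (sq_nonneg a') hi.le]
  exact absurd (hw z hwz) (not_le.mpr hpos)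

/-- if the real symmetric matrix `A` has at most one positive
eigenvalue and `R` is any real `m × n` matrix, then `R * A * Rᵀ` has at most one
positive eigenvalue. -/
theorem congruence_one_pos_eigenvalue (n m : ℕ) (A : Matrix (Fin n) (Fin n) ℝ)
    (hA : A.IsHermitian)
    (hcount : (Finset.univ.filter fun i => 0 < hA.eigenvalues i).card ≤ 1)
    (R : Matrix (Fin m) (Fin n) ℝ)
    (hB : (R * A * Rᵀ).IsHermitian) :
    (Finset.univ.filter fun i => 0 < hB.eigenvalues i).card ≤ 1 := by
  obtain ⟨w, hw⟩ := exists_w n A hA hcount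
  apply card_le_one_of_w m (R * A * Rᵀ) hB (R *ᵥ w)
  intro x hx
  have hy : w ⬝ᵥ (Rᵀ *ᵥ x) = 0 := by
    rw [dotProduct_mulVec, Matrix.vecMul_transpose, ← hx]
  have key : x ⬝ᵥ (R * A * Rᵀ) *ᵥ x = (Rᵀ *ᵥ x) ⬝ᵥ A *ᵥ (Rᵀ *ᵥ x) := by
    rw [← Matrix.mulVec_mulVec, ← Matrix.mulVec_mulVec, dotProduct_mulVec, ← Matrix.mulVec_transpose]
  rw [key]
  exact hw _ hy
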